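/- Let U ⊆ ℝ^m be open and let ω : U → (ℝ^m →L[ℝ] Matrix (Fin N) (Fin N) ℝ) be a smooth connection form. Suppose A : U → Matrix (Fin N) (Fin N) ℝ is a smooth map such that A(x) is invertible for every x ∈ U and for all x ∈ U and u ∈ ℝ^m, the Fréchet derivative of A at x in direction u equals −(ω(x)(u)) * A(x) (i.e. every column of A is a parallel section, and together they form a parallel frame). Then the curvature of ω vanishes identically: for all x ∈ U and u, v ∈ ℝ^m, D_u(y ↦ ω(y)(v))(x) − D_v(y ↦ ω(y)(u))(x) + ω(x)(u) * ω(x)(v) − ω(x)(v) * ω(x)(u) = 0. -/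

import Mathlib

attribute [local instance] Matrix.normedAddCommGroup Matrix.normedSpace

section

/-- The norm topology on square real matrices (used for the auxiliary statement). -/
@[reducible] noncomputable def matTop (N : ℕ) : TopologicalSpace (Matrix (Fin N) (Fin N) ℝ) :=
  (Matrix.normedAddCommGroup (n := Fin N) (m := Fin N) (α := ℝ)).toUniformSpace.toTopologicalSpace

attribute [local instance] matTop

/-- Matrix multiplication as a continuous bilinear map (finite dimensions). -/
noncomputable def matMulCLM (N : ℕ) :
    Matrix (Fin N) (Fin N) ℝ →L[ℝ] Matrix (Fin N) (Fin N) ℝ →L[ℝ] Matrix (Fin N) (Fin N) ℝ :=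
  LinearMap.toContinuousLinearMap
    ((LinearMap.toContinuousLinearMap.toLinearMap).comp
      (LinearMap.mul ℝ (Matrix (Fin N) (Fin N) ℝ)))

@[simp] lemma matMulCLM_apply {N : ℕ} (X Y : Matrix (Fin N) (Fin N) ℝ) :
    matMulCLM N X Y = X * Y := by
  simp [matMulCLM]

/-- **Corollary 1, trivialized.** If a connection form `ω` admits a smooth parallel
frame `A` (an invertible-matrix-valued solution of `dA = -ω·A`), then the curvature
of `ω` vanishes identically. -/
theorem curvature_vanishes_of_parallel_frame_aux {m N : ℕ} {U : Set (Fin m → ℝ)}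
    (hU : IsOpen U)
    (ω : (Fin m → ℝ) → ((Fin m → ℝ) →L[ℝ] Matrix (Fin N) (Fin N) ℝ))
    (hω : ContDiffOn ℝ ⊤ ω U)
    (A : (Fin m → ℝ) → Matrix (Fin N) (Fin N) ℝ)
    (hA : ContDiffOn ℝ ⊤ A U)
    (hinv : ∀ x ∈ U, IsUnit (A x))
    (hpar : ∀ x ∈ U, ∀ u : Fin m → ℝ, fderiv ℝ A x u = -(ω x u) * A x) :
    ∀ x ∈ U, ∀ u v : Fin m → ℝ,
      fderiv ℝ (fun y => ω y v) x u - fderiv ℝ (fun y => ω y u) x v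
        + ω x u * ω x v - ω x v * ω x u = 0 := by
  intro x hx u v
  -- the candidate derivative of A
  set G : (Fin m → ℝ) → ((Fin m → ℝ) →L[ℝ] Matrix (Fin N) (Fin N) ℝ) :=
    fun y => -(((matMulCLM N).flip (A y)).comp (ω y)) with hG
  have hGapp : ∀ y z, G y z = -(ω y z * A y) := by
    intro y z; simp [hG]
  -- A has derivative G y at each y ∈ U
  have hAd : ∀ y ∈ U, HasFDerivAt A (G y) y := by
    intro y hy
    have hdiff : DifferentiableAt ℝ A y :=
      (hA.contDiffAt (hU.mem_nhds hy)).differentiableAt (by simp)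
    have heq : fderiv ℝ A y = G y := by
      apply ContinuousLinearMap.ext
      intro w
      rw [hpar y hy w, hGapp, neg_mul]
    exact heq ▸ hdiff.hasFDerivAt
  -- differentiability of ω and A at x
  have hωx : DifferentiableAt ℝ ω x :=
    (hω.contDiffAt (hU.mem_nhds hx)).differentiableAt (by simp)
  have hAx : DifferentiableAt ℝ A x :=
    (hA.contDiffAt (hU.mem_nhds hx)).differentiableAt (by simp)
  -- G is differentiable at x
  have hGdiff : DifferentiableAt ℝ G x := by
    have h1 : DifferentiableAt ℝ (fun y => (matMulCLM N).flip (A y)) x :=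
      (matMulCLM N).flip.differentiableAt.comp x hAx
    exact (h1.clm_comp hωx).neg
  -- symmetry of the second derivative
  have hsymm : ∀ a b : Fin m → ℝ,
      (fderiv ℝ G x) a b = (fderiv ℝ G x) b a := by
    intro a b
    apply second_derivative_symmetric_of_eventually (f := A) (f' := G)
    · filter_upwards [hU.mem_nhds hx] with y hy using hAd y hy
    · exact hGdiff.hasFDerivAt
  -- (fderiv G x) w z = fderiv (fun y => G y z) x w
  have happ : ∀ z w : Fin m → ℝ,
      (fderiv ℝ G x) w z = fderiv ℝ (fun y => G y z) x w := by
    intro z w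
    have h : fderiv ℝ (fun y => G y z) x
        = (G x).comp (fderiv ℝ (fun _ : Fin m → ℝ => z) x) + (fderiv ℝ G x).flip z :=
      fderiv_clm_apply hGdiff (differentiableAt_const z)
    rw [h]; simp
  -- derivative of fun y => ω y z at x, for fixed z
  have hωz : ∀ z : Fin m → ℝ, HasFDerivAt (fun y => ω y z)
      (fderiv ℝ (fun y => ω y z) x) x := by
    intro z
    exact (hωx.clm_apply (differentiableAt_const z)).hasFDerivAt
  -- compute fderiv (fun y => G y z) x w explicitly
  have hcomp : ∀ z w : Fin m → ℝ,
      fderiv ℝ (fun y => G y z) x w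
        = ω x z * (ω x w * A x) - (fderiv ℝ (fun y => ω y z) x w) * A x := by
    intro z w
    set Dz := fderiv ℝ (fun y => ω y z) x with hDz
    have hc : HasFDerivAt (fun y => matMulCLM N (ω y z)) ((matMulCLM N).comp Dz) x :=
      ((matMulCLM N).hasFDerivAt).comp x (hωz z)
    have hprod : HasFDerivAt (fun y => (matMulCLM N (ω y z)) (A y))
        ((matMulCLM N (ω x z)).comp (G x) + ((matMulCLM N).comp Dz).flip (A x)) x :=
      hc.clm_apply (hAd x hx)
    have hGz : HasFDerivAt (fun y => G y z)
        (-((matMulCLM N (ω x z)).comp (G x) + ((matMulCLM N).comp Dz).flip (A x))) x := by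
      have heq : (fun y => G y z) = fun y => -((matMulCLM N (ω y z)) (A y)) := by
        funext y; rw [hGapp]; simp
      rw [heq]
      exact hprod.neg
    rw [hGz.fderiv]
    simp [hGapp, mul_neg, sub_eq_add_neg, add_comm]
  -- combine symmetry with the computation
  have h1 : ω x v * (ω x u * A x) - (fderiv ℝ (fun y => ω y v) x u) * A x
      = ω x u * (ω x v * A x) - (fderiv ℝ (fun y => ω y u) x v) * A x := by
    have := hsymm u v
    rwa [happ v u, happ u v, hcomp v u, hcomp u v] at this
  have key : (fderiv ℝ (fun y => ω y v) x u - fderiv ℝ (fun y => ω y u) x v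
      + ω x u * ω x v - ω x v * ω x u) * A x = 0 * A x := by
    have expand : (fderiv ℝ (fun y => ω y v) x u - fderiv ℝ (fun y => ω y u) x v
        + ω x u * ω x v - ω x v * ω x u) * A x
        = (ω x u * (ω x v * A x) - (fderiv ℝ (fun y => ω y u) x v) * A x)
          - (ω x v * (ω x u * A x) - (fderiv ℝ (fun y => ω y v) x u) * A x) := by
      noncomm_ring
    rw [expand, h1, sub_self, zero_mul]
  exact (hinv x hx).mul_right_cancel key

end

/-- **Corollary 1, trivialized.** If a connection form `ω` admits a smooth parallel
frame `A` (an invertible-matrix-valued solution of `dA = -ω·A`), then the curvature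
of `ω` vanishes identically. -/
theorem curvature_vanishes_of_parallel_frame {m N : ℕ} {U : Set (Fin m → ℝ)}
    (hU : IsOpen U)
    (ω : (Fin m → ℝ) → ((Fin m → ℝ) →L[ℝ] Matrix (Fin N) (Fin N) ℝ))
    (hω : @ContDiffOn ℝ _ _ _ _ _ ContinuousLinearMap.toNormedAddCommGroup
      ContinuousLinearMap.toNormedSpace ⊤ ω U)
    (A : (Fin m → ℝ) → Matrix (Fin N) (Fin N) ℝ)
    (hA : ContDiffOn ℝ ⊤ A U)
    (hinv : ∀ x ∈ U, IsUnit (A x))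
    (hpar : ∀ x ∈ U, ∀ u : Fin m → ℝ, fderiv ℝ A x u = -(ω x u) * A x) :
    ∀ x ∈ U, ∀ u v : Fin m → ℝ,
      fderiv ℝ (fun y => ω y v) x u - fderiv ℝ (fun y => ω y u) x v
        + ω x u * ω x v - ω x v * ω x u = 0 :=
  curvature_vanishes_of_parallel_frame_aux hU ω hω A hA hinv hpar
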